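/- Let φ : ℝⁿ × ℝ^d → ℝⁿ and ψ : ℝⁿ → ℝ^d. Assume: (i) φ is contractive in its first argument with constant L < 1, i.e. ‖φ(h, x) − φ(h', x)‖ ≤ L‖h − h'‖ for all h, h', x; (ii) φ is M-Lipschitz in its second argument, i.e. ‖φ(h, x) − φ(h, x')‖ ≤ M‖x − x'‖ for all h, x, x'; (iii) ψ is K-Lipschitz. Let (x_t)_{t ≥ 0} be any input sequence with sup_{t ≥ 0} ‖x_t‖ ≤ C₁, set h_{−1} = 0, h_t = φ(h_{t−1}, x_t) and y_t = ψ(h_t). Then for every t ≥ 0, ‖h_t‖ ≤ (‖φ(0,0)‖ + M·C₁)/(1 − L) and ‖y_t‖ ≤ ‖ψ(0)‖ + K·(‖φ(0,0)‖ + M·C₁)/(1 − L); in particular there exists a constant C₂ with sup_{t ≥ 0} ‖y_t‖ ≤ C₂, i.e. Lipschitz stability implies BIBO stability. -/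

import Mathlib

/-- Lipschitz stability implies BIBO stability. If the recurrence map `φ` is
contractive in the state with constant `L < 1`, `M`-Lipschitz in the input, and the output
map `ψ` is `K`-Lipschitz, then for any input sequence bounded by `C₁`, the hidden states
(started from the zero state) satisfy `‖h t‖ ≤ (‖φ 0 0‖ + M C₁)/(1 - L)` and the outputs
satisfy `‖y t‖ ≤ ‖ψ 0‖ + K (‖φ 0 0‖ + M C₁)/(1 - L)`; in particular the output sequence is
bounded. -/
theorem lipschitz_stable_implies_bibo (n d : ℕ)
    (φ : EuclideanSpace ℝ (Fin n) → EuclideanSpace ℝ (Fin d) → EuclideanSpace ℝ (Fin n))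
    (ψ : EuclideanSpace ℝ (Fin n) → EuclideanSpace ℝ (Fin d))
    (L M K C₁ : ℝ) (hL0 : 0 ≤ L) (hL : L < 1) (hM : 0 ≤ M) (hK : 0 ≤ K)
    (hcontr : ∀ (h h' : EuclideanSpace ℝ (Fin n)) (x : EuclideanSpace ℝ (Fin d)),
      ‖φ h x - φ h' x‖ ≤ L * ‖h - h'‖)
    (hlipx : ∀ (h : EuclideanSpace ℝ (Fin n)) (x x' : EuclideanSpace ℝ (Fin d)),
      ‖φ h x - φ h x'‖ ≤ M * ‖x - x'‖)
    (hlipψ : ∀ h h' : EuclideanSpace ℝ (Fin n), ‖ψ h - ψ h'‖ ≤ K * ‖h - h'‖)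
    (x : ℕ → EuclideanSpace ℝ (Fin d)) (hx : ∀ t, ‖x t‖ ≤ C₁)
    (h : ℕ → EuclideanSpace ℝ (Fin n))
    (hinit : h 0 = φ 0 (x 0))
    (hrec : ∀ t : ℕ, h (t + 1) = φ (h t) (x (t + 1)))
    (y : ℕ → EuclideanSpace ℝ (Fin d)) (hy : ∀ t, y t = ψ (h t)) :
    (∀ t, ‖h t‖ ≤ (‖φ 0 0‖ + M * C₁) / (1 - L)) ∧
    (∀ t, ‖y t‖ ≤ ‖ψ 0‖ + K * ((‖φ 0 0‖ + M * C₁) / (1 - L))) ∧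
    (∃ C₂ : ℝ, ∀ t, ‖y t‖ ≤ C₂) := by
  have hC₁ : 0 ≤ C₁ := le_trans (norm_nonneg _) (hx 0)
  set B : ℝ := (‖φ 0 0‖ + M * C₁) / (1 - L) with hB
  have h1L : 0 < 1 - L := by linarith
  have hBkey : L * B + (M * C₁ + ‖φ 0 0‖) = B := by
    have h2 : (1 - L) * B = ‖φ 0 0‖ + M * C₁ := by rw [hB]; field_simp
    linarith
  have key : ∀ (hh : EuclideanSpace ℝ (Fin n)) (xx : EuclideanSpace ℝ (Fin d)),
      ‖φ hh xx‖ ≤ L * ‖hh‖ + M * ‖xx‖ + ‖φ 0 0‖ := by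
    intro hh xx
    calc ‖φ hh xx‖ = ‖(φ hh xx - φ 0 xx) + (φ 0 xx - φ 0 0) + φ 0 0‖ := by congr 1; abel
      _ ≤ ‖(φ hh xx - φ 0 xx) + (φ 0 xx - φ 0 0)‖ + ‖φ 0 0‖ := norm_add_le _ _
      _ ≤ ‖φ hh xx - φ 0 xx‖ + ‖φ 0 xx - φ 0 0‖ + ‖φ 0 0‖ := by
            gcongr; exact norm_add_le _ _
      _ ≤ L * ‖hh - 0‖ + M * ‖xx - 0‖ + ‖φ 0 0‖ := by
            gcongr; exacts [hcontr _ _ _, hlipx _ _ _]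
      _ = L * ‖hh‖ + M * ‖xx‖ + ‖φ 0 0‖ := by rw [sub_zero, sub_zero]
  have hhb : ∀ t, ‖h t‖ ≤ B := by
    intro t
    induction t with
    | zero =>
        rw [hinit]
        calc ‖φ 0 (x 0)‖ ≤ L * ‖(0 : EuclideanSpace ℝ (Fin n))‖ + M * ‖x 0‖ + ‖φ 0 0‖ :=
              key _ _
          _ ≤ L * B + (M * C₁ + ‖φ 0 0‖) := by
              rw [norm_zero]
              have : 0 ≤ L * B := by
                apply mul_nonneg hL0
                apply div_nonneg _ h1L.le
                positivity
              have := hx 0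
              nlinarith
          _ = B := hBkey
    | succ t ih =>
        rw [hrec t]
        calc ‖φ (h t) (x (t + 1))‖ ≤ L * ‖h t‖ + M * ‖x (t + 1)‖ + ‖φ 0 0‖ := key _ _
          _ ≤ L * B + (M * C₁ + ‖φ 0 0‖) := by
              have := hx (t + 1)
              nlinarith
          _ = B := hBkey
  refine ⟨hhb, ?_, ?_⟩
  · intro t
    rw [hy t]
    calc ‖ψ (h t)‖ = ‖ψ 0 + (ψ (h t) - ψ 0)‖ := by congr 1; abel
      _ ≤ ‖ψ 0‖ + ‖ψ (h t) - ψ 0‖ := norm_add_le _ _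
      _ ≤ ‖ψ 0‖ + K * ‖h t - 0‖ := by gcongr; exact hlipψ _ _
      _ ≤ ‖ψ 0‖ + K * B := by rw [sub_zero]; gcongr; exact hhb t
  · refine ⟨‖ψ 0‖ + K * B, fun t => ?_⟩
    rw [hy t]
    calc ‖ψ (h t)‖ = ‖ψ 0 + (ψ (h t) - ψ 0)‖ := by congr 1; abel
      _ ≤ ‖ψ 0‖ + ‖ψ (h t) - ψ 0‖ := norm_add_le _ _
      _ ≤ ‖ψ 0‖ + K * ‖h t - 0‖ := by gcongr; exact hlipψ _ _
      _ ≤ ‖ψ 0‖ + K * B := by rw [sub_zero]; gcongr; exact hhb t
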